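/- Define f_{B_l}(t) = Σ_{k=0}^{l} (-1)^k C(l,k)·C(l+k,k)·t^k and f⁺_{B_l}(t) = Σ_{k=0}^{l} (-1)^k C(l,k)·C(l+k-1,k)·t^k as polynomials over ℤ. Then for all l ≥ 2, f_{B_l}(t) + f_{B_{l-1}}(t) = 2·f⁺_{B_l}(t). -/

import Mathlib

open Polynomial Finset

noncomputable def fBZ (l : ℕ) : Polynomial ℤ :=
  ∑ k ∈ Finset.range (l + 1),
    Polynomial.C ((-1 : ℤ) ^ k * (l.choose k) * ((l + k).choose k)) * Polynomial.X ^ k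

noncomputable def fBplusZ (l : ℕ) : Polynomial ℤ :=
  ∑ k ∈ Finset.range (l + 1),
    Polynomial.C ((-1 : ℤ) ^ k * (l.choose k) * ((l + k - 1).choose k)) * Polynomial.X ^ k

lemma aux_choose (m j : ℕ) :
    (m + 1).choose (j + 1) * (m + j + 1).choose j
      = m.choose j * (m + j + 1).choose (j + 1) := by
  rcases le_or_gt j m with h | h
  · have key := Nat.choose_mul (n := m + j + 1) (k := m + 1) (s := j + 1)
      (by omega)
    simp only [show m + j + 1 - (j + 1) = m by omega,
      show m + 1 - (j + 1) = m - j by omega] at key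
    have e1 : (m + j + 1).choose j = (m + j + 1).choose (m + 1) := by
      have := Nat.choose_symm (show m + 1 ≤ m + j + 1 by omega)
      simpa [show m + j + 1 - (m + 1) = j by omega] using this
    have e2 : m.choose (m - j) = m.choose j := Nat.choose_symm h
    rw [e2] at key
    rw [e1, mul_comm, key, mul_comm]
  · simp [Nat.choose_eq_zero_of_lt (show j + 1 > m + 1 by omega),
      Nat.choose_eq_zero_of_lt h]

lemma coeff_key (m j : ℕ) :
    (m + 1).choose (j + 1) * (m + j + 2).choose (j + 1)
      + m.choose (j + 1) * (m + j + 1).choose (j + 1)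
      = 2 * ((m + 1).choose (j + 1) * (m + j + 1).choose (j + 1)) := by
  have h1 : (m + j + 2).choose (j + 1) = (m + j + 1).choose j + (m + j + 1).choose (j + 1) :=
    Nat.choose_succ_succ' (m + j + 1) j
  have h2 : (m + 1).choose (j + 1) = m.choose j + m.choose (j + 1) :=
    Nat.choose_succ_succ' m j
  have h3 := aux_choose m j
  zify at h1 h2 h3 ⊢
  rw [h1]
  nlinarith [h3, h2]

lemma nat_key (l k : ℕ) (hl : 1 ≤ l) :
    l.choose k * (l + k).choose k + (l - 1).choose k * (l + k - 1).choose k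
      = 2 * (l.choose k * (l + k - 1).choose k) := by
  obtain ⟨m, rfl⟩ : ∃ m, l = m + 1 := ⟨l - 1, by omega⟩
  cases k with
  | zero => simp
  | succ j =>
    rw [show m + 1 + (j + 1) = m + j + 2 by omega,
      show m + j + 2 - 1 = m + j + 1 by omega,
      show m + 1 - 1 = m by omega]
    exact coeff_key m j

theorem fB_add_fB_eq_two_fBplus (l : ℕ) (hl : 2 ≤ l) :
    fBZ l + fBZ (l - 1) = 2 * fBplusZ l := by
  unfold fBZ fBplusZ
  rw [show l - 1 + 1 = l by omega]
  have htop : (Polynomial.C ((-1 : ℤ) ^ l * ((l - 1).choose l) * ((l - 1 + l).choose l))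
      * Polynomial.X ^ l : Polynomial ℤ) = 0 := by
    rw [Nat.choose_eq_zero_of_lt (by omega)]
    simp
  have hext : ∑ k ∈ Finset.range l,
      Polynomial.C ((-1 : ℤ) ^ k * ((l - 1).choose k) * ((l - 1 + k).choose k))
        * Polynomial.X ^ k
      = ∑ k ∈ Finset.range (l + 1),
      Polynomial.C ((-1 : ℤ) ^ k * ((l - 1).choose k) * ((l - 1 + k).choose k))
        * Polynomial.X ^ k := by
    rw [Finset.sum_range_succ, htop, add_zero]
  rw [hext, Finset.mul_sum, ← Finset.sum_add_distrib]
  refine Finset.sum_congr rfl fun k _ => ?_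
  have h := nat_key l k (by omega)
  have h' : ((l.choose k : ℤ) * ((l + k).choose k) + ((l - 1).choose k) * ((l + k - 1).choose k))
      = 2 * ((l.choose k : ℤ) * ((l + k - 1).choose k)) := by exact_mod_cast h
  have hrw : l - 1 + k = l + k - 1 := by omega
  rw [hrw, ← add_mul, ← Polynomial.C_add,
    show (2 : Polynomial ℤ) = Polynomial.C 2 from by simp, ← mul_assoc,
    ← Polynomial.C_mul]
  refine congrArg (· * Polynomial.X ^ k) (congrArg Polynomial.C ?_)
  linear_combination ((-1 : ℤ)) ^ k * h'
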